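/- Let ψ ∈ H_n be a critical state and let g = g₁⊗⋯⊗gₙ be a product operator with all gᵢ invertible such that gψ = ψ. Then the adjoint also stabilizes ψ: g†ψ = ψ. -/

import Mathlib

open scoped BigOperators Matrix
open MeasureTheory

noncomputable section

/-- The Hilbert space of `n` qubits, identified with `ℂ^(2^n)` via the computational basis:
states are functions on bit strings. -/
abbrev QubitState (n : ℕ) := (Fin n → Fin 2) → ℂ

/-- Action of the product operator `g 0 ⊗ ⋯ ⊗ g (n-1)` on an `n`-qubit state,
in the computational basis. -/
def prodOp {n : ℕ} (g : Fin n → Matrix (Fin 2) (Fin 2) ℂ) (ψ : QubitState n) : QubitState n :=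
  fun x => ∑ y : Fin n → Fin 2, (∏ i, g i (x i) (y i)) * ψ y

/-- The standard Hermitian inner product on `n`-qubit states. -/
def qInner {n : ℕ} (ψ φ : QubitState n) : ℂ := ∑ x, (starRingEnd ℂ) (ψ x) * φ x

/-- A state is critical if `⟨ψ, (I ⊗ ⋯ ⊗ X ⊗ ⋯ ⊗ I) ψ⟩ = 0` for every slot `k` and every
traceless `2×2` matrix `X` placed at slot `k`. -/
def IsCritical {n : ℕ} (ψ : QubitState n) : Prop :=
  ∀ (k : Fin n) (X : Matrix (Fin 2) (Fin 2) ℂ), X.trace = 0 →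
    qInner ψ (prodOp (Function.update (fun _ => (1 : Matrix (Fin 2) (Fin 2) ℂ)) k X) ψ) = 0

lemma prodOp_mul {n : ℕ} (g h : Fin n → Matrix (Fin 2) (Fin 2) ℂ) (ψ : QubitState n) :
    prodOp g (prodOp h ψ) = prodOp (fun i => g i * h i) ψ := by
  funext x
  simp only [prodOp, Matrix.mul_apply, Finset.mul_sum]
  rw [Finset.sum_comm]
  refine Finset.sum_congr rfl fun z _ => ?_
  rw [Finset.prod_univ_sum]
  simp only [Fintype.piFinset_univ, Finset.sum_mul, Finset.prod_mul_distrib]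
  exact Finset.sum_congr rfl fun y _ => by ring

lemma prodOp_one {n : ℕ} (ψ : QubitState n) :
    prodOp (fun _ => (1 : Matrix (Fin 2) (Fin 2) ℂ)) ψ = ψ := by
  funext x
  rw [prodOp, Finset.sum_eq_single x]
  · simp [Matrix.one_apply]
  · intro y _ hy
    obtain ⟨i, hi⟩ := Function.ne_iff.mp (Ne.symm hy)
    exact mul_eq_zero_of_left
      (Finset.prod_eq_zero (Finset.mem_univ i) (by simp [Matrix.one_apply, hi])) (ψ y)
  · simp

lemma prodOp_zero {n : ℕ} (g : Fin n → Matrix (Fin 2) (Fin 2) ℂ) :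
    prodOp g (0 : QubitState n) = 0 := by
  funext x; simp [prodOp]

lemma qInner_adj {n : ℕ} (g : Fin n → Matrix (Fin 2) (Fin 2) ℂ) (ψ φ : QubitState n) :
    qInner (prodOp g ψ) φ = qInner ψ (prodOp (fun i => (g i)ᴴ) φ) := by
  simp only [qInner, prodOp, map_sum, map_mul, map_prod, Finset.mul_sum, Finset.sum_mul,
    Matrix.conjTranspose_apply]
  rw [Finset.sum_comm]
  refine Finset.sum_congr rfl fun y _ => Finset.sum_congr rfl fun x _ => ?_
  simp only [Complex.star_def]
  ring

lemma qInner_adj' {n : ℕ} (g : Fin n → Matrix (Fin 2) (Fin 2) ℂ) (ψ φ : QubitState n) :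
    qInner ψ (prodOp g φ) = qInner (prodOp (fun i => (g i)ᴴ) ψ) φ := by
  rw [qInner_adj]
  simp only [Matrix.conjTranspose_conjTranspose]

lemma prodOp_diagonal {n : ℕ} (d : Fin n → Fin 2 → ℂ) (ψ : QubitState n) :
    prodOp (fun i => Matrix.diagonal (d i)) ψ = fun x => (∏ i, d i (x i)) * ψ x := by
  funext x
  rw [prodOp, Finset.sum_eq_single x]
  · simp [Matrix.diagonal_apply_eq]
  · intro y _ hy
    obtain ⟨i, hi⟩ := Function.ne_iff.mp (Ne.symm hy)
    exact mul_eq_zero_of_left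
      (Finset.prod_eq_zero (Finset.mem_univ i) (Matrix.diagonal_apply_ne (d i) hi)) (ψ y)
  · simp

lemma prod_update_matrix {n : ℕ} (o : Fin n → Matrix (Fin 2) (Fin 2) ℂ) (k : Fin n)
    (X : Matrix (Fin 2) (Fin 2) ℂ) (x y : Fin n → Fin 2) :
    ∏ i, Function.update o k X i (x i) (y i)
      = X (x k) (y k) * ∏ i ∈ Finset.univ \ {k}, o i (x i) (y i) := by
  rw [show (fun i => Function.update o k X i (x i) (y i))
      = Function.update (fun i => o i (x i) (y i)) k (X (x k) (y k)) from ?_]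
  · exact Finset.prod_update_of_mem (Finset.mem_univ k) _ _
  · funext i
    rcases eq_or_ne i k with rfl | h
    · simp
    · simp [Function.update_of_ne h]

lemma prodOp_update_apply {n : ℕ} (o : Fin n → Matrix (Fin 2) (Fin 2) ℂ) (k : Fin n)
    (X : Matrix (Fin 2) (Fin 2) ℂ) (ψ : QubitState n) (x : Fin n → Fin 2) :
    prodOp (Function.update o k X) ψ x
      = ∑ y, X (x k) (y k) * (∏ i ∈ Finset.univ \ {k}, o i (x i) (y i)) * ψ y := by
  rw [prodOp]
  exact Finset.sum_congr rfl fun y _ => by rw [prod_update_matrix, mul_assoc]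

lemma prodOp_update_diagonal {n : ℕ} (k : Fin n) (d : Fin 2 → ℂ) (ψ : QubitState n) :
    prodOp (Function.update (fun _ => (1 : Matrix (Fin 2) (Fin 2) ℂ)) k (Matrix.diagonal d)) ψ
      = fun x => d (x k) * ψ x := by
  have h1 : Function.update (fun _ => (1 : Matrix (Fin 2) (Fin 2) ℂ)) k (Matrix.diagonal d)
      = fun i => Matrix.diagonal (Function.update (fun _ _ => (1 : ℂ)) k d i) := by
    funext i
    rcases eq_or_ne i k with rfl | h
    · simp
    · simp [Function.update_of_ne h, Matrix.diagonal_one]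
  rw [h1, prodOp_diagonal]
  funext x
  congr 1
  rw [show (fun i => Function.update (fun _ _ => (1:ℂ)) k d i (x i))
      = Function.update (fun _ => (1:ℂ)) k (d (x k)) from ?_]
  · rw [Finset.prod_update_of_mem (Finset.mem_univ k)]
    simp
  · funext i
    rcases eq_or_ne i k with rfl | h
    · simp
    · simp [Function.update_of_ne h]

lemma qInner_update_add {n : ℕ} (ψ : QubitState n) (k : Fin n)
    (A B : Matrix (Fin 2) (Fin 2) ℂ) :
    qInner ψ (prodOp (Function.update (fun _ => (1 : Matrix (Fin 2) (Fin 2) ℂ)) k (A + B)) ψ)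
      = qInner ψ (prodOp (Function.update (fun _ => (1 : Matrix (Fin 2) (Fin 2) ℂ)) k A) ψ)
      + qInner ψ (prodOp (Function.update (fun _ => (1 : Matrix (Fin 2) (Fin 2) ℂ)) k B) ψ) := by
  simp only [qInner, prodOp_update_apply, Matrix.add_apply, add_mul, Finset.sum_add_distrib,
    mul_add]

lemma qInner_update_smul {n : ℕ} (ψ : QubitState n) (k : Fin n) (c : ℂ)
    (A : Matrix (Fin 2) (Fin 2) ℂ) :
    qInner ψ (prodOp (Function.update (fun _ => (1 : Matrix (Fin 2) (Fin 2) ℂ)) k (c • A)) ψ)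
      = c * qInner ψ (prodOp (Function.update (fun _ => (1 : Matrix (Fin 2) (Fin 2) ℂ)) k A) ψ) := by
  simp only [qInner, prodOp_update_apply, Matrix.smul_apply, smul_eq_mul, Finset.mul_sum]
  refine Finset.sum_congr rfl fun x _ => Finset.sum_congr rfl fun y _ => by ring

lemma crit_apply {n : ℕ} {ψ : QubitState n} (hcrit : IsCritical ψ) (k : Fin n)
    (X : Matrix (Fin 2) (Fin 2) ℂ) :
    qInner ψ (prodOp (Function.update (fun _ => (1 : Matrix (Fin 2) (Fin 2) ℂ)) k X) ψ)
      = (X.trace / 2) * qInner ψ ψ := by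
  have hdecomp : X = (X - (X.trace / 2) • 1) + (X.trace / 2) • 1 := by
    rw [sub_add_cancel]
  have htr : (X - (X.trace / 2) • 1).trace = 0 := by
    rw [Matrix.trace_sub, Matrix.trace_smul, Matrix.trace_one]
    simp [smul_eq_mul]
  conv_lhs => rw [hdecomp]
  rw [qInner_update_add, hcrit k _ htr, qInner_update_smul, zero_add]
  congr 1
  rw [show Function.update (fun _ => (1 : Matrix (Fin 2) (Fin 2) ℂ)) k 1
      = fun _ => (1 : Matrix (Fin 2) (Fin 2) ℂ) from Function.update_eq_self k _,
    prodOp_one]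

/-! ### Spectral data of `gᵢᴴ gᵢ` -/

def lamF {n : ℕ} (g : Fin n → Matrix (Fin 2) (Fin 2) ℂ) (i : Fin n) : Fin 2 → ℝ :=
  (Matrix.isHermitian_conjTranspose_mul_self (g i)).eigenvalues

def uF {n : ℕ} (g : Fin n → Matrix (Fin 2) (Fin 2) ℂ) (i : Fin n) :
    Matrix (Fin 2) (Fin 2) ℂ :=
  ((Matrix.isHermitian_conjTranspose_mul_self (g i)).eigenvectorUnitary :
    Matrix (Fin 2) (Fin 2) ℂ)

lemma lam_nonneg {n : ℕ} (g : Fin n → Matrix (Fin 2) (Fin 2) ℂ) (i : Fin n) (b : Fin 2) :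
    0 ≤ lamF g i b :=
  Matrix.eigenvalues_conjTranspose_mul_self_nonneg (g i) b

lemma uF_mul {n : ℕ} (g : Fin n → Matrix (Fin 2) (Fin 2) ℂ) (i : Fin n) :
    uF g i * (uF g i)ᴴ = 1 := by
  rw [← Matrix.star_eq_conjTranspose]
  exact Matrix.mem_unitaryGroup_iff.mp
    (Matrix.isHermitian_conjTranspose_mul_self (g i)).eigenvectorUnitary.2

lemma uF_mul' {n : ℕ} (g : Fin n → Matrix (Fin 2) (Fin 2) ℂ) (i : Fin n) :
    (uF g i)ᴴ * uF g i = 1 := by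
  rw [← Matrix.star_eq_conjTranspose]
  exact Matrix.mem_unitaryGroup_iff'.mp
    (Matrix.isHermitian_conjTranspose_mul_self (g i)).eigenvectorUnitary.2

lemma spec {n : ℕ} (g : Fin n → Matrix (Fin 2) (Fin 2) ℂ) (i : Fin n) :
    (g i)ᴴ * g i
      = uF g i * Matrix.diagonal (fun b => (lamF g i b : ℂ)) * (uF g i)ᴴ := by
  have h := (Matrix.isHermitian_conjTranspose_mul_self (g i)).spectral_theorem
  rw [h, Unitary.conjStarAlgAut_apply]
  rfl

lemma det_hermOf {n : ℕ} (g : Fin n → Matrix (Fin 2) (Fin 2) ℂ) (i : Fin n) :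
    ((g i)ᴴ * g i).det = (Complex.normSq (g i).det : ℂ) := by
  rw [Matrix.det_mul, Matrix.det_conjTranspose, Complex.star_def,
    ← Complex.normSq_eq_conj_mul_self]

lemma lam_prod {n : ℕ} (g : Fin n → Matrix (Fin 2) (Fin 2) ℂ) (i : Fin n) :
    ∏ b, lamF g i b = Complex.normSq (g i).det := by
  have h := (Matrix.isHermitian_conjTranspose_mul_self (g i)).det_eq_prod_eigenvalues
  rw [det_hermOf] at h
  have h2 : ((Complex.normSq (g i).det : ℝ) : ℂ) = ((∏ b, lamF g i b : ℝ) : ℂ) := by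
    rw [h]; push_cast; rfl
  exact_mod_cast h2.symm

lemma lam_pos {n : ℕ} (g : Fin n → Matrix (Fin 2) (Fin 2) ℂ) (i : Fin n)
    (hgi : IsUnit (g i)) (b : Fin 2) : 0 < lamF g i b := by
  refine (lam_nonneg g i b).lt_of_ne' ?_
  intro h0
  have hdet : (g i).det ≠ 0 := by
    have := (Matrix.isUnit_iff_isUnit_det _).mp hgi
    simpa [isUnit_iff_ne_zero] using this
  have : Complex.normSq (g i).det = 0 := by
    rw [← lam_prod]
    exact Finset.prod_eq_zero (Finset.mem_univ b) h0
  exact hdet (Complex.normSq_eq_zero.mp this)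

lemma key {n : ℕ} {ψ : QubitState n} (hcrit : IsCritical ψ) (hψ : ψ ≠ 0)
    (g : Fin n → Matrix (Fin 2) (Fin 2) ℂ) (hg : ∀ i, IsUnit (g i))
    (hfix : prodOp g ψ = ψ) :
    (∑ i, Real.log (Complex.normSq (g i).det)) ≤ 0 ∧
    ((∑ i, Real.log (Complex.normSq (g i).det)) = 0 →
      prodOp (fun i => (g i)ᴴ * g i) ψ = ψ) := by
  classical
  set φ : QubitState n := prodOp (fun i => (uF g i)ᴴ) ψ with hφdef
  set W : (Fin n → Fin 2) → ℝ := fun x => Complex.normSq (φ x) with hWdef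
  set P : (Fin n → Fin 2) → ℝ := fun x => ∏ i, lamF g i (x i) with hPdef
  have hUφ : prodOp (fun i => uF g i) φ = ψ := by
    rw [hφdef, prodOp_mul,
      show (fun i => uF g i * (uF g i)ᴴ) = fun _ => (1 : Matrix (Fin 2) (Fin 2) ℂ) from
        funext fun i => uF_mul g i]
    exact prodOp_one ψ
  have hψψ : qInner ψ ψ = ∑ x, (W x : ℂ) := by
    conv_lhs => rw [← hUφ]
    rw [qInner_adj, prodOp_mul,
      show (fun i => (uF g i)ᴴ * uF g i) = fun _ => (1 : Matrix (Fin 2) (Fin 2) ℂ) from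
        funext fun i => uF_mul' g i,
      prodOp_one, qInner]
    refine Finset.sum_congr rfl fun x _ => ?_
    simp only [hWdef]
    rw [Complex.normSq_eq_conj_mul_self]
  have hφne : φ ≠ 0 := by
    intro h
    exact hψ (by rw [← hUφ, h, prodOp_zero])
  have hSW_pos : 0 < ∑ x, W x := by
    obtain ⟨x0, hx0⟩ := Function.ne_iff.mp hφne
    refine Finset.sum_pos' (fun x _ => Complex.normSq_nonneg _)
      ⟨x0, Finset.mem_univ x0, ?_⟩
    simp only [hWdef]
    exact Complex.normSq_pos.mpr (by simpa using hx0)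
  have hPpos : ∀ x, 0 < P x := fun x =>
    Finset.prod_pos fun i _ => lam_pos g i (hg i) (x i)
  have hlamne : ∀ i b, lamF g i b ≠ 0 := fun i b => (lam_pos g i (hg i) b).ne'
  -- the diagonal action
  have hdiagφ : prodOp (fun i => Matrix.diagonal (fun b => (lamF g i b : ℂ))) φ
      = fun x => (P x : ℂ) * φ x := by
    rw [prodOp_diagonal]
    funext x
    simp only [hPdef]
    push_cast
    rfl
  have hhψ : prodOp (fun i => (g i)ᴴ * g i) ψ
      = prodOp (fun i => uF g i) (fun x => (P x : ℂ) * φ x) := by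
    have hs : (fun i => (g i)ᴴ * g i)
        = fun i => uF g i * Matrix.diagonal (fun b => (lamF g i b : ℂ)) * (uF g i)ᴴ :=
      funext fun i => spec g i
    rw [hs, ← hdiagφ, hφdef, prodOp_mul, prodOp_mul]
  -- R1 : ∑ P W = ∑ W
  have hR1C : ∑ x, (P x : ℂ) * (W x : ℂ) = ∑ x, (W x : ℂ) := by
    have e3 : qInner ψ (prodOp (fun i => (g i)ᴴ * g i) ψ) = qInner ψ ψ := by
      have h1 : prodOp (fun i => (g i)ᴴ * g i) ψ = prodOp (fun i => (g i)ᴴ) ψ := by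
        rw [← prodOp_mul, hfix]
      rw [h1, qInner_adj']
      simp only [Matrix.conjTranspose_conjTranspose]
      rw [hfix]
    have e2 : qInner ψ (prodOp (fun i => (g i)ᴴ * g i) ψ)
        = ∑ x, (P x : ℂ) * (W x : ℂ) := by
      rw [hhψ, qInner_adj', ← hφdef]
      · rw [qInner]
        refine Finset.sum_congr rfl fun x _ => ?_
        simp only [hWdef]
        rw [show (starRingEnd ℂ) (φ x) * ((P x : ℂ) * φ x)
            = (P x : ℂ) * ((starRingEnd ℂ) (φ x) * φ x) from by ring,
          Complex.normSq_eq_conj_mul_self]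
    rw [← e2, e3, hψψ]
  have hR1 : ∑ x, P x * W x = ∑ x, W x := by
    have h := hR1C
    push_cast at h
    exact_mod_cast h
  -- R2 : ∑ W log P = (C/2) ∑ W
  have hE4 : ∀ k, ∑ x, Real.log (lamF g k (x k)) * W x
      = Real.log (Complex.normSq (g k).det) / 2 * ∑ x, W x := by
    intro k
    set L : Matrix (Fin 2) (Fin 2) ℂ :=
      Matrix.diagonal (fun b => (Real.log (lamF g k b) : ℂ)) with hLdef
    have hC1 : qInner φ (prodOp (Function.update
          (fun _ => (1 : Matrix (Fin 2) (Fin 2) ℂ)) k L) φ)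
        = ∑ x, (Real.log (lamF g k (x k)) : ℂ) * (W x : ℂ) := by
      rw [hLdef, prodOp_update_diagonal, qInner]
      refine Finset.sum_congr rfl fun x _ => ?_
      simp only [hWdef]
      rw [show (starRingEnd ℂ) (φ x) * ((Real.log (lamF g k (x k)) : ℂ) * φ x)
          = (Real.log (lamF g k (x k)) : ℂ) * ((starRingEnd ℂ) (φ x) * φ x) from by ring,
        Complex.normSq_eq_conj_mul_self]
    have hfam : (fun i => uF g i * (Function.update
          (fun _ => (1 : Matrix (Fin 2) (Fin 2) ℂ)) k L i * (uF g i)ᴴ))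
        = Function.update (fun _ => (1 : Matrix (Fin 2) (Fin 2) ℂ)) k
            (uF g k * (L * (uF g k)ᴴ)) := by
      funext i
      rcases eq_or_ne i k with rfl | h
      · simp
      · simp [Function.update_of_ne h, uF_mul]
    have hC2 : qInner φ (prodOp (Function.update
          (fun _ => (1 : Matrix (Fin 2) (Fin 2) ℂ)) k L) φ)
        = ((∑ b, (Real.log (lamF g k b) : ℂ)) / 2) * qInner ψ ψ := by
      conv_lhs => rw [hφdef]
      rw [qInner_adj]
      simp only [Matrix.conjTranspose_conjTranspose]
      rw [show prodOp (Function.update (fun _ => (1 : Matrix (Fin 2) (Fin 2) ℂ)) k L)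
            (prodOp (fun i => (uF g i)ᴴ) ψ)
          = prodOp (fun i => Function.update (fun _ => (1 : Matrix (Fin 2) (Fin 2) ℂ)) k L i
              * (uF g i)ᴴ) ψ from prodOp_mul _ _ _,
        prodOp_mul, hfam, crit_apply hcrit]
      congr 2
      rw [Matrix.trace_mul_comm, mul_assoc, uF_mul', mul_one, hLdef, Matrix.trace_diagonal]
    have hcast : ((∑ x, Real.log (lamF g k (x k)) * W x : ℝ) : ℂ)
        = ((Real.log (Complex.normSq (g k).det) / 2 * ∑ x, W x : ℝ) : ℂ) := by
      push_cast
      rw [hC1.symm.trans hC2, hψψ]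
      have hr : ∑ b, Real.log (lamF g k b) = Real.log (Complex.normSq (g k).det) := by
        rw [← lam_prod g k, Real.log_prod fun b _ => hlamne k b]
      have hslc : ∑ b, (Real.log (lamF g k b) : ℂ)
          = (Real.log (Complex.normSq (g k).det) : ℂ) := by
        rw [← hr]
        push_cast
        rfl
      rw [hslc]
    exact_mod_cast hcast
  have hR2 : ∑ x, W x * Real.log (P x)
      = (∑ i, Real.log (Complex.normSq (g i).det)) / 2 * ∑ x, W x := by
    have hlogP : ∀ x, Real.log (P x) = ∑ i, Real.log (lamF g i (x i)) := fun x => by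
      rw [hPdef]
      exact Real.log_prod fun i _ => hlamne i (x i)
    calc ∑ x, W x * Real.log (P x)
        = ∑ x, ∑ i, Real.log (lamF g i (x i)) * W x := by
          refine Finset.sum_congr rfl fun x _ => ?_
          rw [hlogP x, mul_comm, Finset.sum_mul]
      _ = ∑ i, ∑ x, Real.log (lamF g i (x i)) * W x := Finset.sum_comm
      _ = ∑ i, Real.log (Complex.normSq (g i).det) / 2 * ∑ x, W x := by
          exact Finset.sum_congr rfl fun i _ => hE4 i
      _ = (∑ i, Real.log (Complex.normSq (g i).det)) / 2 * ∑ x, W x := by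
          rw [← Finset.sum_mul, ← Finset.sum_div]
  -- main inequality
  have hterm : ∀ x, 0 ≤ W x * (P x - 1 - Real.log (P x)) := by
    intro x
    refine mul_nonneg (Complex.normSq_nonneg _) ?_
    have h := Real.add_one_le_exp (Real.log (P x))
    rw [Real.exp_log (hPpos x)] at h
    linarith
  have hexpand : ∑ x, W x * (P x - 1 - Real.log (P x))
      = -((∑ i, Real.log (Complex.normSq (g i).det)) / 2 * ∑ x, W x) := by
    have : ∑ x, W x * (P x - 1 - Real.log (P x))
        = (∑ x, P x * W x) - (∑ x, W x) - ∑ x, W x * Real.log (P x) := by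
      rw [← Finset.sum_sub_distrib, ← Finset.sum_sub_distrib]
      exact Finset.sum_congr rfl fun x _ => by ring
    rw [this, hR1, hR2]
    ring
  have hsumnn : 0 ≤ ∑ x, W x * (P x - 1 - Real.log (P x)) :=
    Finset.sum_nonneg fun x _ => hterm x
  constructor
  · nlinarith [hsumnn, hexpand, hSW_pos]
  · intro hC0
    have hzero : ∑ x, W x * (P x - 1 - Real.log (P x)) = 0 := by
      rw [hexpand, hC0]
      ring
    have hall := (Finset.sum_eq_zero_iff_of_nonneg fun x _ => hterm x).mp hzero
    have hPone : ∀ x, φ x ≠ 0 → P x = 1 := by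
      intro x hx
      have hWx : W x ≠ 0 := by
        simp only [hWdef]
        exact fun h => hx (Complex.normSq_eq_zero.mp h)
      have h1 := hall x (Finset.mem_univ x)
      have h2 : P x - 1 - Real.log (P x) = 0 := by
        rcases mul_eq_zero.mp h1 with h | h
        · exact absurd h hWx
        · exact h
      by_contra hne
      have hlogne : Real.log (P x) ≠ 0 := by
        intro h0
        rw [h0] at h2
        apply hne
        linarith
      have := Real.add_one_lt_exp hlogne
      rw [Real.exp_log (hPpos x)] at this
      linarith
    have hPφ : (fun x => (P x : ℂ) * φ x) = φ := by
      funext x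
      by_cases hx : φ x = 0
      · rw [hx, mul_zero]
      · rw [hPone x hx, Complex.ofReal_one, one_mul]
    rw [hhψ, hPφ, hUφ]


/-- If `ψ` is critical and the product operator `g = g₁ ⊗ ⋯ ⊗ gₙ` with all `gᵢ` invertible
fixes `ψ`, then its Hermitian adjoint `g† = g₁ᴴ ⊗ ⋯ ⊗ gₙᴴ` also fixes `ψ`. -/
theorem critical_stabilizer_closed_under_adjoint (n : ℕ) (ψ : QubitState n)
    (hcrit : IsCritical ψ)
    (g : Fin n → Matrix (Fin 2) (Fin 2) ℂ) (hg : ∀ i, IsUnit (g i))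
    (hfix : prodOp g ψ = ψ) :
    prodOp (fun i => (g i)ᴴ) ψ = ψ := by
  by_cases hψ0 : ψ = 0
  · rw [hψ0]
    exact prodOp_zero _
  have key1 := key hcrit hψ0 g hg hfix
  have hg' : ∀ i, IsUnit ((g i)⁻¹) := fun i => Matrix.isUnit_nonsing_inv_iff.mpr (hg i)
  have hfix' : prodOp (fun i => (g i)⁻¹) ψ = ψ := by
    conv_lhs => rw [← hfix]
    rw [prodOp_mul,
      show (fun i => (g i)⁻¹ * g i) = fun _ => (1 : Matrix (Fin 2) (Fin 2) ℂ) from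
        funext fun i => Matrix.nonsing_inv_mul _ ((Matrix.isUnit_iff_isUnit_det _).mp (hg i)),
      prodOp_one]
  have key2 := key hcrit hψ0 (fun i => (g i)⁻¹) hg' hfix'
  have hdet' : ∀ i, Complex.normSq ((g i)⁻¹).det = (Complex.normSq ((g i).det))⁻¹ := by
    intro i
    rw [Matrix.det_nonsing_inv, Ring.inverse_eq_inv', map_inv₀]
  have hsum' : (∑ i, Real.log (Complex.normSq ((g i)⁻¹).det))
      = -∑ i, Real.log (Complex.normSq ((g i).det)) := by
    rw [← Finset.sum_neg_distrib]
    exact Finset.sum_congr rfl fun i _ => by rw [hdet' i, Real.log_inv]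
  have hC0 : ∑ i, Real.log (Complex.normSq (g i).det) = 0 := by
    have h2 := key2.1
    rw [hsum'] at h2
    linarith [key1.1]
  have hgh := key1.2 hC0
  calc prodOp (fun i => (g i)ᴴ) ψ = prodOp (fun i => (g i)ᴴ) (prodOp g ψ) := by rw [hfix]
    _ = prodOp (fun i => (g i)ᴴ * g i) ψ := prodOp_mul _ _ _
    _ = ψ := hgh
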